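/- Let n ≥ m in ℕ and g, h ∈ G, and set P_{g,n} = U_g S^n (S^n)* (U_g)* and P_{h,m} = U_h S^m (S^m)* (U_h)* in B(ℓ²(G)). Then P_{g,n}·P_{h,m} = P_{g,n} if g ∈ h·φ^m(G) (equivalently, if g·φ^n(G) ⊆ h·φ^m(G)), and P_{g,n}·P_{h,m} = 0 otherwise. In particular, for fixed n, the projections P_{g,n} and P_{h,n} are orthogonal whenever g^{-1}h ∉ φ^n(G). -/

import Mathlib

open scoped ComplexInnerProductSpace


/-- `ℓ²(G)`. -/
noncomputable abbrev l2 (G : Type*) := lp (fun _ : G => ℂ) 2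

/-- The orthonormal basis vector `ξ_h ∈ ℓ²(G)`. -/
noncomputable def xi (G : Type*) [DecidableEq G] (h : G) : l2 G := lp.single 2 h (1 : ℂ)

section aux
variable {G : Type*} [DecidableEq G]

lemma xi_apply (a b : G) : (xi G a : ∀ _ : G, ℂ) b = if b = a then 1 else 0 := by
  simp [xi, lp.single_apply, Pi.single_apply]

lemma clm_ext_xi {T T' : l2 G →L[ℂ] l2 G} (h : ∀ g : G, T (xi G g) = T' (xi G g)) : T = T' := by
  refine ContinuousLinearMap.ext fun x => ?_
  have hs := lp.hasSum_single ENNReal.ofNat_ne_top x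
  have h1 : ∀ g : G, lp.single 2 g (x g) = x g • xi G g := by
    intro g
    rw [xi, ← lp.single_smul]
    simp
  have hT : HasSum (fun g : G => T (lp.single 2 g (x g))) (T x) := T.hasSum hs
  have hT' : HasSum (fun g : G => T' (lp.single 2 g (x g))) (T' x) := T'.hasSum hs
  refine hT.unique ?_
  convert hT' using 2 with g
  rw [h1, map_smul, map_smul, h]

lemma inner_xi_left (a : G) (x : l2 G) : ⟪xi G a, x⟫ = x a := by
  rw [xi, lp.inner_single_left]
  simp

lemma star_apply_xi (T : l2 G →L[ℂ] l2 G) (y : l2 G) (a : G) :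
    ((star T y : l2 G) : ∀ _ : G, ℂ) a = ⟪T (xi G a), y⟫ := by
  rw [← inner_xi_left, ContinuousLinearMap.star_eq_adjoint,
    ContinuousLinearMap.adjoint_inner_right]

lemma inner_xi_xi (a b : G) : ⟪xi G a, xi G b⟫ = if a = b then 1 else 0 := by
  rw [inner_xi_left, xi_apply]

end aux

/-- `φ^n(G)` as a subgroup of `G`. -/
def rng {G : Type*} [Group G] (φ : Monoid.End G) (n : ℕ) : Subgroup G :=
  MonoidHom.range ((φ ^ n : Monoid.End G) : G →* G)

/-- The operator `P g n = U_g S^n (S^n)* (U_g)*`. -/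
noncomputable def P {G : Type*} (U : G → (l2 G →L[ℂ] l2 G)) (S : l2 G →L[ℂ] l2 G)
    (g : G) (n : ℕ) : l2 G →L[ℂ] l2 G :=
  U g * S ^ n * star (S ^ n) * star (U g)

section main
set_option linter.unusedSectionVars false
variable {G : Type*} [Group G] [DecidableEq G]

lemma end_pow_succ (φ : Monoid.End G) (n : ℕ) (x : G) :
    (φ ^ (n + 1)) x = (φ ^ n) (φ x) := by
  rw [pow_succ]; rfl

lemma end_pow_inj {φ : Monoid.End G} (hinj : Function.Injective φ) (n : ℕ) :
    Function.Injective (φ ^ n : Monoid.End G) := by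
  induction n with
  | zero => intro a b hab; simpa [pow_zero] using hab
  | succ k ih =>
    intro a b hab
    rw [end_pow_succ, end_pow_succ] at hab
    exact hinj (ih hab)

lemma rng_le {φ : Monoid.End G} {m n : ℕ} (hmn : m ≤ n) : rng φ n ≤ rng φ m := by
  rintro x ⟨k, rfl⟩
  refine ⟨(φ ^ (n - m)) k, ?_⟩
  show (φ ^ m) ((φ ^ (n - m)) k) = (φ ^ n) k
  have : (φ ^ m : Monoid.End G) * (φ ^ (n - m)) = φ ^ n := by
    rw [← pow_add, Nat.add_sub_cancel' hmn]
  calc ((φ ^ m : Monoid.End G) : G →* G).comp ((φ ^ (n-m) : Monoid.End G) : G →* G) k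
      = ((φ ^ m : Monoid.End G) * (φ ^ (n - m))) k := rfl
    _ = (φ ^ n) k := by rw [this]

variable {φ : Monoid.End G} (hinj : Function.Injective φ)
  {U : G → (l2 G →L[ℂ] l2 G)} {S : l2 G →L[ℂ] l2 G}
  (hU : ∀ g h : G, U g (xi G h) = xi G (g * h))
  (hS : ∀ h : G, S (xi G h) = xi G (φ h))

include hS in
lemma Spow_apply (n : ℕ) : ∀ h : G, (S ^ n) (xi G h) = xi G ((φ ^ n) h) := by
  induction n with
  | zero => intro h; simp [pow_zero]
  | succ k ih =>
    intro h
    have : (S ^ (k + 1)) (xi G h) = (S ^ k) (S (xi G h)) := by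
      rw [pow_succ]; rfl
    rw [this, hS, ih, end_pow_succ]

include hS in
lemma l2_coord_eq (x y : l2 G) (h : ∀ a : G, (x : ∀ _ : G, ℂ) a = (y : ∀ _ : G, ℂ) a) :
    x = y := lp.ext (funext h)

include hinj hS in
lemma starSpow_apply_mem (n : ℕ) (k : G) :
    star (S ^ n) (xi G ((φ ^ n) k)) = xi G k := by
  refine lp.ext (funext fun a => ?_)
  rw [star_apply_xi, Spow_apply hS, inner_xi_xi, xi_apply]
  by_cases hak : a = k
  · subst hak; simp
  · rw [if_neg hak, if_neg (fun hc => hak (end_pow_inj hinj n hc))]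

include hS in
lemma starSpow_apply_not_mem (n : ℕ) (h : G) (hh : h ∉ rng φ n) :
    star (S ^ n) (xi G h) = 0 := by
  refine lp.ext (funext fun a => ?_)
  rw [star_apply_xi, Spow_apply hS, inner_xi_xi]
  rw [if_neg (show ¬ (φ ^ n) a = h from fun hc => hh ⟨a, hc⟩)]
  simp

include hU in
lemma starU_apply (g h : G) : star (U g) (xi G h) = xi G (g⁻¹ * h) := by
  refine lp.ext (funext fun a => ?_)
  rw [star_apply_xi, hU, inner_xi_xi, xi_apply]
  by_cases hc : g * a = h
  · rw [if_pos hc, if_pos (by rw [← hc]; group)]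
  · rw [if_neg hc, if_neg (fun hc2 => hc (by rw [hc2]; group))]

include hinj hU hS in
lemma P_apply_mem (g : G) (n : ℕ) (x : G) (hmem : g⁻¹ * x ∈ rng φ n) :
    P U S g n (xi G x) = xi G x := by
  have hP : P U S g n (xi G x) = U g ((S ^ n) (star (S ^ n) (star (U g) (xi G x)))) := rfl
  obtain ⟨k, hk⟩ := hmem
  replace hk : (φ ^ n) k = g⁻¹ * x := hk
  rw [hP, starU_apply hU, ← hk, starSpow_apply_mem hinj hS, Spow_apply hS, hk, hU]
  congr 1
  group

include hU hS in
lemma P_apply_not_mem (g : G) (n : ℕ) (x : G) (hmem : g⁻¹ * x ∉ rng φ n) :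
    P U S g n (xi G x) = 0 := by
  have hP : P U S g n (xi G x) = U g ((S ^ n) (star (S ^ n) (star (U g) (xi G x)))) := rfl
  rw [hP, starU_apply hU, starSpow_apply_not_mem hS _ _ hmem]
  simp

end main

/-- **Statement 7.** Let `n ≥ m` and `g, h ∈ G`, and put `P_{g,n} = U_g S^n (S^n)* (U_g)*`,
`P_{h,m} = U_h S^m (S^m)* (U_h)*`.  Then `P_{g,n}·P_{h,m} = P_{g,n}` if `g ∈ h·φ^m(G)`
(equivalently, if `g·φ^n(G) ⊆ h·φ^m(G)`), and `P_{g,n}·P_{h,m} = 0` otherwise.  In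
particular, for fixed `n`, `P_{g,n}` and `P_{h,n}` are orthogonal whenever
`g⁻¹h ∉ φ^n(G)`. -/
theorem P_mul_P (G : Type*) [Group G] [DecidableEq G]
    (φ : Monoid.End G) (hinj : Function.Injective φ) (hfin : Finite (G ⧸ rng φ 1))
    (U : G → (l2 G →L[ℂ] l2 G)) (S : l2 G →L[ℂ] l2 G)
    (hU : ∀ g h : G, U g (xi G h) = xi G (g * h))
    (hS : ∀ h : G, S (xi G h) = xi G (φ h))
    (m n : ℕ) (hmn : m ≤ n) :
    (∀ g h : G, h⁻¹ * g ∈ rng φ m → P U S g n * P U S h m = P U S g n) ∧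
    (∀ g h : G, h⁻¹ * g ∉ rng φ m → P U S g n * P U S h m = 0) ∧
    (∀ g h : G, h⁻¹ * g ∈ rng φ m ↔
      {x : G | g⁻¹ * x ∈ rng φ n} ⊆ {x : G | h⁻¹ * x ∈ rng φ m}) ∧
    (∀ g h : G, g⁻¹ * h ∉ rng φ n → P U S g n * P U S h n = 0) := by
  have key0 : ∀ (m' n' : ℕ), m' ≤ n' → ∀ g h : G, h⁻¹ * g ∉ rng φ m' →
      P U S g n' * P U S h m' = 0 := by
    intro m' n' hmn' g h hgh
    refine clm_ext_xi fun x => ?_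
    rw [ContinuousLinearMap.mul_apply]
    by_cases hx : h⁻¹ * x ∈ rng φ m'
    · rw [P_apply_mem hinj hU hS _ _ _ hx]
      have hgx : g⁻¹ * x ∉ rng φ n' := by
        intro hc
        apply hgh
        have heq : h⁻¹ * g = (h⁻¹ * x) * (g⁻¹ * x)⁻¹ := by group
        rw [heq]
        exact mul_mem hx (inv_mem (rng_le hmn' hc))
      rw [P_apply_not_mem hU hS _ _ _ hgx]
      simp
    · rw [P_apply_not_mem hU hS _ _ _ hx]
      simp
  refine ⟨?_, fun g h hgh => key0 m n hmn g h hgh, ?_, ?_⟩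
  · intro g h hgh
    refine clm_ext_xi fun x => ?_
    rw [ContinuousLinearMap.mul_apply]
    by_cases hx : h⁻¹ * x ∈ rng φ m
    · rw [P_apply_mem hinj hU hS _ _ _ hx]
    · rw [P_apply_not_mem hU hS _ _ _ hx, map_zero]
      have hgx : g⁻¹ * x ∉ rng φ n := by
        intro hc
        apply hx
        have heq : h⁻¹ * x = (h⁻¹ * g) * (g⁻¹ * x) := by group
        rw [heq]
        exact mul_mem hgh (rng_le hmn hc)
      rw [P_apply_not_mem hU hS _ _ _ hgx]
  · intro g h
    constructor
    · intro hgh x hx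
      have heq : h⁻¹ * x = (h⁻¹ * g) * (g⁻¹ * x) := by group
      show h⁻¹ * x ∈ rng φ m
      rw [heq]
      exact mul_mem hgh (rng_le hmn hx)
    · intro hsub
      have hg : g ∈ {x : G | g⁻¹ * x ∈ rng φ n} := by
        show g⁻¹ * g ∈ rng φ n
        rw [inv_mul_cancel]
        exact one_mem _
      exact hsub hg
  · intro g h hgh
    refine key0 n n le_rfl g h fun hc => hgh ?_
    have := inv_mem hc
    simpa using this
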